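/- Let A be an n×n symmetric positive definite matrix, B an n×m matrix of full column rank (m < n), and C = BᵀA⁻¹B. With 𝒜 = [[A, B],[Bᵀ, 0]] and 𝒜̄ = [[A, B],[-Bᵀ, C]], every eigenvalue of 𝒜̄⁻¹𝒜 is either 1 (with multiplicity n) or -1/2 (with multiplicity m). -/

import Mathlib

open Matrix

private lemma racp_map_mul {k l o : Type*} [Fintype l] (M : Matrix k l ℝ) (N : Matrix l o ℝ) :
    (M * N).map Complex.ofReal = M.map Complex.ofReal * N.map Complex.ofReal := by
  ext i j
  simp only [Matrix.mul_apply, Matrix.map_apply]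
  push_cast
  ring

private lemma racp_map_one {k : Type*} [Fintype k] [DecidableEq k] :
    (1 : Matrix k k ℝ).map Complex.ofReal = 1 := by
  ext i j
  simp [Matrix.map_apply, Matrix.one_apply, apply_ite]

private lemma racp_map_sub {k l : Type*} (M N : Matrix k l ℝ) :
    (M - N).map Complex.ofReal = M.map Complex.ofReal - N.map Complex.ofReal := by
  ext i j
  simp [Matrix.map_apply]

private lemma racp_map_half_smul {k l : Type*} (M : Matrix k l ℝ) :
    ((1/2 : ℝ) • M).map Complex.ofReal = (1/2 : ℂ) • M.map Complex.ofReal := by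
  ext i j
  simp [Matrix.map_apply]

/-- Theorem 2.4 (ideal case): with `C = BᵀA⁻¹B`, every eigenvalue of `𝒜̄⁻¹𝒜` is `1`
(with multiplicity `n`) or `-1/2` (with multiplicity `m`). -/
theorem racp_alternative_ideal_eigenvalues
    (n m : ℕ) (hmn : m < n)
    (A : Matrix (Fin n) (Fin n) ℝ) (hA : A.PosDef)
    (B : Matrix (Fin n) (Fin m) ℝ) (hB : B.rank = m)
    (C : Matrix (Fin m) (Fin m) ℝ) (hC : C = Bᵀ * A⁻¹ * B)
    (𝒜 : Matrix (Fin n ⊕ Fin m) (Fin n ⊕ Fin m) ℝ)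
    (h𝒜 : 𝒜 = Matrix.fromBlocks A B Bᵀ 0)
    (𝒜bar : Matrix (Fin n ⊕ Fin m) (Fin n ⊕ Fin m) ℝ)
    (h𝒜bar : 𝒜bar = Matrix.fromBlocks A B (-Bᵀ) C)
    (P : Matrix (Fin n ⊕ Fin m) (Fin n ⊕ Fin m) ℂ)
    (hP : P = (𝒜bar⁻¹ * 𝒜).map Complex.ofReal) :
    (∀ μ : ℂ, (∃ v : Fin n ⊕ Fin m → ℂ, v ≠ 0 ∧ P *ᵥ v = μ • v) →
      μ = 1 ∨ μ = -(1 / 2)) ∧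
    Module.finrank ℂ (LinearMap.ker ((P - (1 : ℂ) • 1).mulVecLin)) = n ∧
    Module.finrank ℂ (LinearMap.ker ((P - (-((1 : ℂ) / 2)) • 1).mulVecLin)) = m := by
  classical
  -- A is invertible
  haveI hAinv : Invertible A := A.invertibleOfIsUnitDet (isUnit_iff_ne_zero.2 hA.det_pos.ne')
  -- B is injective (as mulVec)
  have hBinj : ∀ x : Fin m → ℝ, B *ᵥ x = 0 → x = 0 := by
    intro x hx
    have h1 : Module.finrank ℝ (LinearMap.range B.mulVecLin)
        + Module.finrank ℝ (LinearMap.ker B.mulVecLin) = m := by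
      simpa [Module.finrank_fin_fun] using LinearMap.finrank_range_add_finrank_ker B.mulVecLin
    have h2 : Module.finrank ℝ (LinearMap.ker B.mulVecLin) = 0 := by
      have hr : Module.finrank ℝ (LinearMap.range B.mulVecLin) = m := hB
      omega
    have h3 : LinearMap.ker B.mulVecLin = ⊥ := Submodule.finrank_eq_zero.mp h2
    have hmem : x ∈ LinearMap.ker B.mulVecLin := by
      simpa [Matrix.mulVecLin_apply] using hx
    rw [h3] at hmem
    simpa using hmem
  -- C is invertible
  have hCinj : ∀ y : Fin m → ℝ, C *ᵥ y = 0 → y = 0 := by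
    intro y hy
    have hAi : (A⁻¹).PosDef := hA.inv
    by_contra hy0
    have hBy : B *ᵥ y ≠ 0 := fun h => hy0 (hBinj y h)
    have hpos : 0 < (B *ᵥ y) ⬝ᵥ (A⁻¹ *ᵥ (B *ᵥ y)) := by
      simpa using hAi.dotProduct_mulVec_pos hBy
    have hzero : (B *ᵥ y) ⬝ᵥ (A⁻¹ *ᵥ (B *ᵥ y)) = 0 := by
      have h0 : y ⬝ᵥ (C *ᵥ y) = 0 := by rw [hy]; simp
      rw [hC] at h0
      rw [show Bᵀ * A⁻¹ * B = Bᵀ * (A⁻¹ * B) from Matrix.mul_assoc _ _ _] at h0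
      rw [← Matrix.mulVec_mulVec, ← Matrix.mulVec_mulVec] at h0
      rwa [Matrix.dotProduct_mulVec, Matrix.vecMul_transpose] at h0
    linarith
  have hCdet : IsUnit C.det := by
    rw [isUnit_iff_ne_zero]
    intro h
    obtain ⟨v, hv0, hv⟩ := Matrix.exists_mulVec_eq_zero_iff.mpr h
    exact hv0 (hCinj v hv)
  haveI hCinv : Invertible C := C.invertibleOfIsUnitDet hCdet
  -- abbreviations
  set K : Matrix (Fin n) (Fin m) ℝ := A⁻¹ * B with hK
  set R : Matrix (Fin m) (Fin n) ℝ := C⁻¹ * Bᵀ with hR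
  have hAK : A * K = B := by rw [hK]; exact Matrix.mul_inv_cancel_left_of_invertible A B
  have hCR : C * R = Bᵀ := by rw [hR]; exact Matrix.mul_inv_cancel_left_of_invertible C Bᵀ
  have hBK : Bᵀ * K = C := by rw [hK, ← Matrix.mul_assoc, ← hC]
  have hRK : R * K = 1 := by
    rw [hR, Matrix.mul_assoc, hBK, Matrix.nonsing_inv_mul C hCdet]
  -- the explicit form of 𝒜bar⁻¹ * 𝒜
  set P₀ : Matrix (Fin n ⊕ Fin m) (Fin n ⊕ Fin m) ℝ :=
    Matrix.fromBlocks (1 - K * R) ((1/2 : ℝ) • K) R ((1/2 : ℝ) • 1) with hP₀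
  have hbar : 𝒜bar * P₀ = 𝒜 := by
    rw [h𝒜bar, h𝒜, hP₀, Matrix.fromBlocks_multiply]
    have hTL : A * (1 - K * R) + B * R = A := by
      rw [Matrix.mul_sub, Matrix.mul_one, ← Matrix.mul_assoc, hAK]
      abel
    have hTR : A * ((1/2 : ℝ) • K) + B * ((1/2 : ℝ) • (1 : Matrix (Fin m) (Fin m) ℝ)) = B := by
      rw [Matrix.mul_smul, Matrix.mul_smul, hAK, Matrix.mul_one]
      module
    have hBL : (-Bᵀ) * (1 - K * R) + C * R = Bᵀ := by
      rw [Matrix.neg_mul, Matrix.mul_sub, Matrix.mul_one, ← Matrix.mul_assoc, hBK, hCR]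
      abel
    have hBR : (-Bᵀ) * ((1/2 : ℝ) • K) + C * ((1/2 : ℝ) • (1 : Matrix (Fin m) (Fin m) ℝ)) = 0 := by
      rw [Matrix.neg_mul, Matrix.mul_smul, Matrix.mul_smul, hBK, Matrix.mul_one]
      module
    rw [hTL, hTR, hBL, hBR]
  -- 𝒜bar is invertible
  set E : Matrix (Fin n ⊕ Fin m) (Fin n ⊕ Fin m) ℝ :=
    Matrix.fromBlocks (A⁻¹ - (1/2 : ℝ) • (K * (R * A⁻¹))) (-((1/2 : ℝ) • (K * C⁻¹)))
      ((1/2 : ℝ) • (R * A⁻¹)) ((1/2 : ℝ) • C⁻¹) with hE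
  have hrightInv : 𝒜bar * E = 1 := by
    rw [h𝒜bar, hE, Matrix.fromBlocks_multiply]
    have hAKR : A * (K * (R * A⁻¹)) = B * (R * A⁻¹) := by
      rw [← Matrix.mul_assoc, hAK]
    have hBKR : Bᵀ * (K * (R * A⁻¹)) = C * (R * A⁻¹) := by
      rw [← Matrix.mul_assoc, hBK]
    have hCRA : C * (R * A⁻¹) = Bᵀ * A⁻¹ := by rw [← Matrix.mul_assoc, hCR]
    have hTL : A * (A⁻¹ - (1/2 : ℝ) • (K * (R * A⁻¹))) + B * ((1/2 : ℝ) • (R * A⁻¹)) = 1 := by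
      rw [Matrix.mul_sub, Matrix.mul_smul, Matrix.mul_smul, hAKR,
        Matrix.mul_inv_of_invertible]
      module
    have hTR : A * (-((1/2 : ℝ) • (K * C⁻¹))) + B * ((1/2 : ℝ) • C⁻¹) = 0 := by
      rw [Matrix.mul_neg, Matrix.mul_smul, Matrix.mul_smul, ← Matrix.mul_assoc, hAK]
      module
    have hBL : (-Bᵀ) * (A⁻¹ - (1/2 : ℝ) • (K * (R * A⁻¹)))
        + C * ((1/2 : ℝ) • (R * A⁻¹)) = 0 := by
      rw [Matrix.neg_mul, Matrix.mul_sub, Matrix.mul_smul, Matrix.mul_smul, hBKR, hCRA]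
      module
    have hBR : (-Bᵀ) * (-((1/2 : ℝ) • (K * C⁻¹))) + C * ((1/2 : ℝ) • C⁻¹) = 1 := by
      rw [Matrix.neg_mul, Matrix.mul_neg, neg_neg, Matrix.mul_smul, Matrix.mul_smul,
        ← Matrix.mul_assoc, hBK, Matrix.mul_inv_of_invertible]
      module
    rw [hTL, hTR, hBL, hBR, Matrix.fromBlocks_one]
  haveI hbarInv : Invertible 𝒜bar := invertibleOfRightInverse 𝒜bar E hrightInv
  have hPinv : 𝒜bar⁻¹ * 𝒜 = P₀ := by
    rw [← hbar, Matrix.inv_mul_cancel_left_of_invertible 𝒜bar P₀]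
  -- complex blocks
  set Kc : Matrix (Fin n) (Fin m) ℂ := K.map Complex.ofReal with hKc
  set Rc : Matrix (Fin m) (Fin n) ℂ := R.map Complex.ofReal with hRc
  have hRKc : Rc * Kc = 1 := by
    rw [hRc, hKc, ← racp_map_mul, hRK, racp_map_one]
  have hPc : P = Matrix.fromBlocks (1 - Kc * Rc) ((1/2 : ℂ) • Kc) Rc ((1/2 : ℂ) • 1) := by
    rw [hP, hPinv, hP₀, Matrix.fromBlocks_map, racp_map_sub, racp_map_one, racp_map_mul,
      racp_map_half_smul, racp_map_half_smul, racp_map_one, ← hKc, ← hRc]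
  -- component equations for P *ᵥ v
  have hcomp : ∀ (v : Fin n ⊕ Fin m → ℂ),
      P *ᵥ v = Sum.elim
        ((v ∘ Sum.inl) - Kc *ᵥ (Rc *ᵥ (v ∘ Sum.inl)) + (1/2 : ℂ) • (Kc *ᵥ (v ∘ Sum.inr)))
        (Rc *ᵥ (v ∘ Sum.inl) + (1/2 : ℂ) • (v ∘ Sum.inr)) := by
    intro v
    have hv : v = Sum.elim (v ∘ Sum.inl) (v ∘ Sum.inr) := by
      ext (i | j) <;> rfl
    rw [hPc]
    conv_lhs => rw [hv]
    rw [Matrix.fromBlocks_mulVec]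
    simp only [Sum.elim_comp_inl, Sum.elim_comp_inr]
    rw [Matrix.sub_mulVec, Matrix.one_mulVec, ← Matrix.mulVec_mulVec,
      Matrix.smul_mulVec, Matrix.smul_mulVec, Matrix.one_mulVec]
  -- PART 1 : eigenvalues
  refine ⟨?_, ?_, ?_⟩
  · rintro μ ⟨v, hv0, hv⟩
    set x : Fin n → ℂ := v ∘ Sum.inl with hx
    set y : Fin m → ℂ := v ∘ Sum.inr with hy
    rw [hcomp v] at hv
    have h1 : x - Kc *ᵥ (Rc *ᵥ x) + (1/2 : ℂ) • (Kc *ᵥ y) = μ • x := by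
      funext i; exact congrFun hv (Sum.inl i)
    have h2 : Rc *ᵥ x + (1/2 : ℂ) • y = μ • y := by
      funext j; exact congrFun hv (Sum.inr j)
    by_cases hμ : μ = 1
    · exact Or.inl hμ
    · right
      have hRx : Rc *ᵥ x = (μ - 1/2) • y := by
        funext j
        have := congrFun h2 j
        simp only [Pi.add_apply, Pi.smul_apply, Pi.sub_apply, smul_eq_mul] at this ⊢
        linear_combination this
      have hxeq : (1 - μ) • x = (1 - μ) • (-(Kc *ᵥ y)) := by
        funext i
        have h1i := congrFun h1 i
        rw [hRx] at h1i
        have hKs : (Kc *ᵥ (μ - 1/2) • y) i = (μ - 1/2) * (Kc *ᵥ y) i := by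
          rw [Matrix.mulVec_smul]; simp
        simp only [Pi.add_apply, Pi.sub_apply, Pi.smul_apply, Pi.neg_apply,
          smul_eq_mul] at h1i ⊢
        rw [hKs] at h1i
        linear_combination h1i
      have hxy : x = -(Kc *ᵥ y) :=
        smul_right_injective (Fin n → ℂ) (sub_ne_zero.mpr (Ne.symm hμ)) hxeq
      have hRxy : Rc *ᵥ x = -y := by
        rw [hxy, Matrix.mulVec_neg, Matrix.mulVec_mulVec, hRKc, Matrix.one_mulVec]
      have hyeq : ∀ j, (μ + 1/2) * y j = 0 := by
        intro j
        have h2j := congrFun h2 j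
        rw [hRxy] at h2j
        simp only [Pi.add_apply, Pi.neg_apply, Pi.smul_apply, smul_eq_mul] at h2j
        linear_combination -h2j
      have hyne : y ≠ 0 := by
        intro hy0
        apply hv0
        have hx0 : x = 0 := by rw [hxy, hy0]; simp
        ext (i | j)
        · exact congrFun hx0 i
        · exact congrFun hy0 j
      obtain ⟨j, hj⟩ := Function.ne_iff.mp hyne
      have := hyeq j
      have hμ2 : μ + 1/2 = 0 := by
        rcases mul_eq_zero.mp this with h | h
        · exact h
        · exact absurd h hj
      linear_combination hμ2
  -- PART 2 : eigenspace of 1 has dimension n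
  · set L1 : (Fin n → ℂ) →ₗ[ℂ] (Fin n ⊕ Fin m → ℂ) :=
      { toFun := fun x => Sum.elim x ((2 : ℂ) • (Rc *ᵥ x))
        map_add' := by
          intro a b
          have hadd : Rc *ᵥ (a + b) = Rc *ᵥ a + Rc *ᵥ b := Matrix.mulVec_add _ _ _
          funext x
          cases x with
          | inl i => rfl
          | inr j =>
            show (2 : ℂ) • (Rc *ᵥ (a + b)) j
              = (2 : ℂ) • (Rc *ᵥ a) j + (2 : ℂ) • (Rc *ᵥ b) j
            rw [hadd]
            simp [mul_add]
        map_smul' := by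
          intro c a
          have hsmul : Rc *ᵥ (c • a) = c • (Rc *ᵥ a) := Matrix.mulVec_smul _ _ _
          funext x
          cases x with
          | inl i => rfl
          | inr j =>
            show (2 : ℂ) • (Rc *ᵥ (c • a)) j = c • ((2 : ℂ) • (Rc *ᵥ a) j)
            rw [hsmul]
            simp only [Pi.smul_apply, smul_eq_mul]
            ring } with hL1
    have hkerr : LinearMap.ker ((P - (1 : ℂ) • 1).mulVecLin) = LinearMap.range L1 := by
      ext v
      simp only [LinearMap.mem_ker, LinearMap.mem_range, Matrix.mulVecLin_apply]
      rw [Matrix.sub_mulVec, one_smul, Matrix.one_mulVec, sub_eq_zero]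
      constructor
      · intro hv
        refine ⟨v ∘ Sum.inl, ?_⟩
        rw [hcomp v] at hv
        have h2 : Rc *ᵥ (v ∘ Sum.inl) + (1/2 : ℂ) • (v ∘ Sum.inr) = v ∘ Sum.inr := by
          funext j; exact congrFun hv (Sum.inr j)
        ext (i | j)
        · rfl
        · show (2 : ℂ) * (Rc *ᵥ (v ∘ Sum.inl)) j = v (Sum.inr j)
          have := congrFun h2 j
          simp only [Pi.add_apply, Pi.smul_apply, smul_eq_mul, Function.comp_apply] at this
          linear_combination 2 * this
      · rintro ⟨x, rfl⟩
        rw [hcomp]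
        have hil : (L1 x) ∘ Sum.inl = x := rfl
        have hir : (L1 x) ∘ Sum.inr = (2 : ℂ) • (Rc *ᵥ x) := rfl
        rw [hil, hir]
        ext (i | j)
        · show (x - Kc *ᵥ (Rc *ᵥ x) + (1/2 : ℂ) • (Kc *ᵥ (2 : ℂ) • (Rc *ᵥ x))) i = x i
          rw [Matrix.mulVec_smul]
          simp only [Pi.add_apply, Pi.sub_apply, Pi.smul_apply, smul_eq_mul]
          ring
        · show (Rc *ᵥ x + (1/2 : ℂ) • ((2 : ℂ) • (Rc *ᵥ x))) j
            = ((2 : ℂ) • (Rc *ᵥ x)) j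
          simp only [Pi.add_apply, Pi.smul_apply, smul_eq_mul]
          ring
    have hinj : Function.Injective L1 := by
      intro a b hab
      funext i
      exact congrFun hab (Sum.inl i)
    rw [hkerr, LinearMap.finrank_range_of_inj hinj, Module.finrank_fin_fun]
  -- PART 3 : eigenspace of -1/2 has dimension m
  · set L2 : (Fin m → ℂ) →ₗ[ℂ] (Fin n ⊕ Fin m → ℂ) :=
      { toFun := fun u => Sum.elim (Kc *ᵥ u) (-u)
        map_add' := by
          intro a b
          have hadd : Kc *ᵥ (a + b) = Kc *ᵥ a + Kc *ᵥ b := Matrix.mulVec_add _ _ _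
          funext x
          cases x with
          | inl i =>
            show (Kc *ᵥ (a + b)) i = (Kc *ᵥ a) i + (Kc *ᵥ b) i
            rw [hadd]; rfl
          | inr j =>
            show -(a + b) j = -a j + -b j
            simp only [Pi.neg_apply, Pi.add_apply]
            ring
        map_smul' := by
          intro c a
          have hsmul : Kc *ᵥ (c • a) = c • (Kc *ᵥ a) := Matrix.mulVec_smul _ _ _
          funext x
          cases x with
          | inl i =>
            show (Kc *ᵥ (c • a)) i = c • (Kc *ᵥ a) i
            rw [hsmul]; rfl
          | inr j =>
            show -(c • a) j = c • (-a j)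
            simp only [Pi.neg_apply, Pi.smul_apply, smul_eq_mul]
            ring } with hL2
    have hkerr : LinearMap.ker ((P - (-((1 : ℂ) / 2)) • 1).mulVecLin) = LinearMap.range L2 := by
      ext v
      simp only [LinearMap.mem_ker, LinearMap.mem_range, Matrix.mulVecLin_apply]
      rw [Matrix.sub_mulVec, Matrix.smul_mulVec, Matrix.one_mulVec, sub_eq_zero]
      constructor
      · intro hv
        refine ⟨-(v ∘ Sum.inr), ?_⟩
        rw [hcomp v] at hv
        set x : Fin n → ℂ := v ∘ Sum.inl
        set y : Fin m → ℂ := v ∘ Sum.inr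
        have h1 : x - Kc *ᵥ (Rc *ᵥ x) + (1/2 : ℂ) • (Kc *ᵥ y) = -(1/2 : ℂ) • x := by
          funext i; exact congrFun hv (Sum.inl i)
        have h2 : Rc *ᵥ x + (1/2 : ℂ) • y = -(1/2 : ℂ) • y := by
          funext j; exact congrFun hv (Sum.inr j)
        have hRx : Rc *ᵥ x = -y := by
          funext j
          have := congrFun h2 j
          simp only [Pi.add_apply, Pi.smul_apply, Pi.neg_apply, smul_eq_mul] at this ⊢
          linear_combination this
        have hxKy : x = Kc *ᵥ (-y) := by
          rw [hRx] at h1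
          rw [Matrix.mulVec_neg]
          funext i
          have := congrFun h1 i
          simp only [Pi.add_apply, Pi.sub_apply, Pi.smul_apply, Pi.neg_apply,
            Matrix.mulVec_neg, smul_eq_mul] at this ⊢
          linear_combination (2/3 : ℂ) * this
        ext (i | j)
        · show (Kc *ᵥ (-(v ∘ Sum.inr))) i = v (Sum.inl i)
          exact (congrFun hxKy i).symm
        · show -(-(v ∘ Sum.inr)) j = v (Sum.inr j)
          simp
      · rintro ⟨u, rfl⟩
        rw [hcomp]
        have hil : (L2 u) ∘ Sum.inl = Kc *ᵥ u := rfl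
        have hir : (L2 u) ∘ Sum.inr = -u := rfl
        rw [hil, hir]
        have hRKu : Rc *ᵥ (Kc *ᵥ u) = u := by
          rw [Matrix.mulVec_mulVec, hRKc, Matrix.one_mulVec]
        ext (i | j)
        · show (Kc *ᵥ u - Kc *ᵥ (Rc *ᵥ (Kc *ᵥ u)) + (1/2 : ℂ) • (Kc *ᵥ (-u))) i
            = (-(1/2 : ℂ) • Sum.elim (Kc *ᵥ u) (-u)) (Sum.inl i)
          rw [hRKu, Matrix.mulVec_neg]
          simp only [Pi.add_apply, Pi.sub_apply, Pi.smul_apply, Pi.neg_apply,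
            Sum.elim_inl, smul_eq_mul]
          ring
        · show (Rc *ᵥ (Kc *ᵥ u) + (1/2 : ℂ) • (-u)) j
            = (-(1/2 : ℂ) • Sum.elim (Kc *ᵥ u) (-u)) (Sum.inr j)
          rw [hRKu]
          simp only [Pi.add_apply, Pi.smul_apply, Pi.neg_apply, Sum.elim_inr, smul_eq_mul]
          ring
    have hinj : Function.Injective L2 := by
      intro a b hab
      funext j
      have h : -(a j) = -(b j) := congrFun hab (Sum.inr j)
      exact neg_injective h
    rw [hkerr, LinearMap.finrank_range_of_inj hinj, Module.finrank_fin_fun]
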